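/- A linear isometry f of ℝ^12 (with the standard inner product) satisfies f(D_12^+) = D_12^+ if and only if f is a signed permutation with an even number of sign changes, i.e., there exist a permutation σ of {1,…,12} and signs ε_1, …, ε_12 ∈ {±1} with ε_1 ⋯ ε_12 = 1 such that (f(x))_i = ε_i x_{σ(i)} for all x ∈ ℝ^12 and all i. Hence the orthogonal group of the lattice D_12^+ is isomorphic to S_12 ⋉ 2^11. -/

import Mathlib

open scoped RealInnerProductSpace

/-- The lattice `D₁₂⁺ ⊆ ℝ¹²`: all coordinates integers or all coordinates half-integers,
with coordinate sum in `2ℤ`. -/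
def D12plus : Set (EuclideanSpace ℝ (Fin 12)) :=
  {x | ((∀ i, ∃ n : ℤ, x i = (n : ℝ)) ∨ (∀ i, ∃ n : ℤ, x i = (n : ℝ) + 1 / 2)) ∧
    ∃ m : ℤ, ∑ i, x i = 2 * (m : ℝ)}

lemma prod_sign_eq (n : ℕ) (ε : Fin n → ℝ) (hε : ∀ i, ε i = 1 ∨ ε i = -1) :
    ∏ i, ε i = (-1) ^ (Finset.univ.filter (fun i => ε i = -1)).card := by
  classical
  rw [← Finset.prod_filter_mul_prod_filter_not Finset.univ (fun i => ε i = -1)]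
  rw [Finset.prod_congr rfl (fun i hi => (Finset.mem_filter.mp hi).2),
    Finset.prod_const]
  rw [Finset.prod_congr rfl (fun i hi => ((hε i).resolve_right (Finset.mem_filter.mp hi).2 : ε i = 1)),
    Finset.prod_const, one_pow, mul_one]


lemma sum_sign_eq (n : ℕ) (ε : Fin n → ℝ) (hε : ∀ i, ε i = 1 ∨ ε i = -1) :
    ∑ i, ε i = n - 2 * (Finset.univ.filter (fun i => ε i = -1)).card := by
  classical
  rw [← Finset.sum_filter_add_sum_filter_not Finset.univ (fun i => ε i = -1)]
  rw [Finset.sum_congr rfl (fun i hi => (Finset.mem_filter.mp hi).2), Finset.sum_const]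
  rw [Finset.sum_congr rfl (fun i hi => ((hε i).resolve_right (Finset.mem_filter.mp hi).2 : ε i = 1)),
    Finset.sum_const]
  have hcard := Finset.card_filter_add_card_filter_not (s := Finset.univ (α := Fin n))
    (p := fun i => ε i = -1)
  simp only [Finset.card_univ, Fintype.card_fin] at hcard
  have : (Finset.univ.filter (fun i => ¬ ε i = -1)).card
      = n - (Finset.univ.filter (fun i => ε i = -1)).card := by omega
  rw [this]
  have hle : (Finset.univ.filter (fun i => ε i = -1)).card ≤ n := by omega
  rw [nsmul_eq_mul, nsmul_eq_mul, Nat.cast_sub hle]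
  ring

lemma signed_perm_mem (σ : Equiv.Perm (Fin 12)) (ε : Fin 12 → ℝ)
    (hε : ∀ i, ε i = 1 ∨ ε i = -1) (hprod : ∏ i, ε i = 1)
    {x y : EuclideanSpace ℝ (Fin 12)} (hx : x ∈ D12plus)
    (hy : ∀ i, y i = ε i * x (σ i)) : y ∈ D12plus := by
  classical
  obtain ⟨hco, m, hm⟩ := hx
  -- evenness of the number of sign flips
  have hk : Even (Finset.univ.filter (fun i => ε i = -1)).card := by
    rw [prod_sign_eq 12 ε hε] at hprod
    exact (neg_one_pow_eq_one_iff_even (by norm_num : (-1:ℝ) ≠ 1)).mp hprod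
  have hkz : ((Finset.univ.filter (fun i => ε i = -1)).card : ZMod 2) = 0 := by
    obtain ⟨t, ht⟩ := hk
    rw [ht]; push_cast; ring_nf
    rw [show ((2:ZMod 2)) = 0 by decide]; ring
  rcases hco with hco | hco
  · -- integer case
    choose n hn using hco
    set z : Fin 12 → ℤ := fun i => if ε i = 1 then n (σ i) else -(n (σ i)) with hz
    have hyz : ∀ i, y i = (z i : ℝ) := by
      intro i
      rcases hε i with h | h
      · rw [hy i, hn (σ i), h]; simp only [hz]; rw [if_pos h]; push_cast; ring
      · rw [hy i, hn (σ i), h]; simp only [hz]; rw [if_neg (by rw [h]; norm_num : ¬ ε i = 1)]; push_cast; ring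
    have hnsum : ∑ i, n i = 2 * m := by
      have : ((∑ i, n i : ℤ) : ℝ) = ((2 * m : ℤ) : ℝ) := by
        push_cast
        rw [← hm]
        exact (Finset.sum_congr rfl fun i _ => (hn i).symm)
      exact_mod_cast this
    have hdvd : (2:ℤ) ∣ ∑ i, z i := by
      have h2 : ((∑ i, z i : ℤ) : ZMod 2) = 0 := by
        push_cast
        have : ∀ i, ((z i : ℤ) : ZMod 2) = ((n (σ i) : ℤ) : ZMod 2) := by
          intro i
          rcases hε i with h | h
          · simp only [hz]; rw [if_pos h]
          · simp only [hz]; rw [if_neg (by rw [h]; norm_num : ¬ ε i = 1)]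
            push_cast
            rw [CharTwo.neg_eq]
        rw [Finset.sum_congr rfl fun i _ => this i]
        rw [Equiv.sum_comp σ (fun i => ((n i : ℤ) : ZMod 2))]
        have : ((∑ i, n i : ℤ) : ZMod 2) = (((2 * m : ℤ)) : ZMod 2) := by rw [hnsum]
        push_cast at this
        rw [this]
        rw [show ((2:ZMod 2)) = 0 by decide]; ring
      exact (ZMod.intCast_zmod_eq_zero_iff_dvd _ 2).mp h2
    obtain ⟨m', hm'⟩ := hdvd
    refine ⟨Or.inl fun i => ⟨z i, hyz i⟩, m', ?_⟩
    rw [Finset.sum_congr rfl fun i _ => hyz i]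
    rw [← Int.cast_sum, hm']
    push_cast; ring
  · -- half-integer case
    choose n hn using hco
    set z : Fin 12 → ℤ := fun i => if ε i = 1 then n (σ i) else -(n (σ i)) - 1 with hz
    have hyz : ∀ i, y i = (z i : ℝ) + 1 / 2 := by
      intro i
      rcases hε i with h | h
      · rw [hy i, hn (σ i), h]; simp only [hz]; rw [if_pos h]; push_cast; ring
      · rw [hy i, hn (σ i), h]; simp only [hz]; rw [if_neg (by rw [h]; norm_num : ¬ ε i = 1)]; push_cast; ring
    have hnsum : ∑ i, n i = 2 * (m - 3) := by
      have : ((∑ i, n i : ℤ) : ℝ) = ((2 * (m - 3) : ℤ) : ℝ) := by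
        push_cast
        have h6 : ∑ i, x i = (∑ i, (n i:ℝ)) + 6 := by
          rw [Finset.sum_congr rfl fun i _ => hn i, Finset.sum_add_distrib]
          norm_num
        have := hm
        rw [h6] at this
        linarith
      exact_mod_cast this
    have hdvd : (2:ℤ) ∣ ∑ i, z i := by
      have h2 : ((∑ i, z i : ℤ) : ZMod 2) = 0 := by
        push_cast
        have : ∀ i, ((z i : ℤ) : ZMod 2)
            = ((n (σ i) : ℤ) : ZMod 2) + (if ε i = -1 then 1 else 0) := by
          intro i
          rcases hε i with h | h
          · simp only [hz]; rw [if_pos h, if_neg (by rw [h]; norm_num : ¬ ε i = -1)]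
            rw [add_zero]
          · simp only [hz]; rw [if_neg (by rw [h]; norm_num : ¬ ε i = 1), if_pos h]
            push_cast
            rw [CharTwo.neg_eq]
            rw [sub_eq_add_neg, CharTwo.neg_eq]
        rw [Finset.sum_congr rfl fun i _ => this i, Finset.sum_add_distrib]
        rw [Equiv.sum_comp σ (fun i => ((n i : ℤ) : ZMod 2))]
        have h1 : ((∑ i, n i : ℤ) : ZMod 2) = 0 := by
          rw [hnsum]; push_cast
          rw [show ((2:ZMod 2)) = 0 by decide]; ring
        push_cast at h1
        rw [h1]
        rw [Finset.sum_boole]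
        rw [hkz]
        ring
      exact (ZMod.intCast_zmod_eq_zero_iff_dvd _ 2).mp h2
    obtain ⟨m', hm'⟩ := hdvd
    refine ⟨Or.inr fun i => ⟨z i, hyz i⟩, m' + 3, ?_⟩
    rw [Finset.sum_congr rfl fun i _ => hyz i, Finset.sum_add_distrib]
    rw [← Int.cast_sum, hm']
    push_cast; norm_num; ring

lemma mini1 {a b : ℝ} (h1 : a+b=0 ∨ a+b=1 ∨ a+b=-1) (h2 : a-b=0 ∨ a-b=1 ∨ a-b=-1) :
    a = 0 ∨ a = 1 ∨ a = -1 ∨ (a = 1/2 ∨ a = -1/2) := by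
  rcases h1 with h|h|h <;> rcases h2 with h'|h'|h' <;>
    first
      | (left; linarith)
      | (right; left; linarith)
      | (right; right; left; linarith)
      | (right; right; right; left; linarith)
      | (right; right; right; right; linarith)

lemma mini2 {a b : ℝ} (h1 : a+b=0 ∨ a+b=1 ∨ a+b=-1) (h2 : a-b=0 ∨ a-b=1 ∨ a-b=-1)
    (ha : a = 1/2 ∨ a = -1/2) : b^2 = 1/4 := by
  have hb : b = 1/2 ∨ b = -1/2 := by
    rcases ha with ha|ha <;> rcases h1 with h|h|h <;> rcases h2 with h'|h'|h' <;>
      first | (left; linarith) | (right; linarith)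
  rcases hb with hb|hb <;> rw [hb] <;> norm_num

lemma coords_small {x : EuclideanSpace ℝ (Fin 12)} (hx : x ∈ D12plus)
    (h2 : ∑ p, (x p)^2 = 2) : ∀ p, x p = 0 ∨ x p = 1 ∨ x p = -1 := by
  obtain ⟨hco, -⟩ := hx
  rcases hco with hco | hco
  · choose n hn using hco
    intro p
    have hle : (x p)^2 ≤ 2 := by
      have hls : (x p)^2 ≤ ∑ q, (x q)^2 := Finset.single_le_sum (f := fun q => (x q)^2)
        (fun q _ => sq_nonneg (x q)) (Finset.mem_univ p)
      linarith
    rw [hn p] at hle ⊢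
    have hle' : (n p)^2 ≤ 2 := by
        have h' : ((n p ^ 2 : ℤ) : ℝ) ≤ ((2 : ℤ) : ℝ) := by push_cast; linarith
        exact Int.cast_le.mp h'
    have h3 : n p = 0 ∨ n p = 1 ∨ n p = -1 := by
      have hb : -1 ≤ n p ∧ n p ≤ 1 := by constructor <;> nlinarith
      omega
    rcases h3 with h|h|h <;> rw [h] <;> norm_num
  · exfalso
    choose n hn using hco
    have hq : ∀ q, (1:ℝ)/4 ≤ (x q)^2 := by
      intro q; rw [hn q]
      rcases le_or_gt 0 (n q) with h | h
      · have : (0:ℝ) ≤ (n q : ℝ) := by exact_mod_cast h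
        nlinarith
      · have h' : n q ≤ -1 := by omega
        have : (n q : ℝ) ≤ -1 := by exact_mod_cast h'
        nlinarith
    have hsum := Finset.sum_le_sum (fun q (_ : q ∈ Finset.univ) => hq q)
    rw [h2] at hsum
    simp [Finset.sum_const] at hsum
    norm_num at hsum


/-- A linear isometry of ℝ¹² preserves `D₁₂⁺` if and only if it is a signed permutation
of the coordinates with an even number of sign changes; hence
`O(D₁₂⁺) ≅ S₁₂ ⋉ 2¹¹`. -/
theorem D12plus_orthogonal_group
    (f : EuclideanSpace ℝ (Fin 12) ≃ₗᵢ[ℝ] EuclideanSpace ℝ (Fin 12)) :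
    f '' D12plus = D12plus ↔
    ∃ σ : Equiv.Perm (Fin 12), ∃ ε : Fin 12 → ℝ,
      (∀ i, ε i = 1 ∨ ε i = -1) ∧ (∏ i, ε i = 1) ∧
      ∀ (x : EuclideanSpace ℝ (Fin 12)) (i : Fin 12), f x i = ε i * x (σ i) := by
  constructor
  · intro h
    classical
    have hfD : ∀ v ∈ D12plus, f v ∈ D12plus := by
      intro v hv; rw [← h]; exact Set.mem_image_of_mem f hv
    have sumsq : ∀ v : EuclideanSpace ℝ (Fin 12), ∑ p, (f v p)^2 = ∑ p, (v p)^2 := by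
      intro v
      have hinner := f.inner_map_map v v
      rw [PiLp.inner_apply, PiLp.inner_apply] at hinner
      simpa [RCLike.inner_apply, conj_trivial, pow_two] using hinner
    set e : Fin 12 → EuclideanSpace ℝ (Fin 12) := fun i => EuclideanSpace.single i 1 with he
    set g : Fin 12 → EuclideanSpace ℝ (Fin 12) := fun i => f (e i) with hg
    have hmemadd : ∀ i j : Fin 12, i ≠ j → e i + e j ∈ D12plus := by
      intro i j hij
      constructor
      · left
        intro q
        refine ⟨(if q = i then 1 else 0) + (if q = j then 1 else 0), ?_⟩
        rw [PiLp.add_apply]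
        simp [he, EuclideanSpace.single_apply]
      · refine ⟨1, ?_⟩
        have hco : ∀ q, (e i + e j) q = (if q = i then (1:ℝ) else 0) + (if q = j then 1 else 0) := by
          intro q; rw [PiLp.add_apply]; simp [he, EuclideanSpace.single_apply]
        rw [Finset.sum_congr rfl fun q _ => hco q, Finset.sum_add_distrib]
        simp
        norm_num
    have hmemsub : ∀ i j : Fin 12, i ≠ j → e i - e j ∈ D12plus := by
      intro i j hij
      constructor
      · left
        intro q
        refine ⟨(if q = i then 1 else 0) - (if q = j then 1 else 0), ?_⟩
        rw [PiLp.sub_apply]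
        simp [he, EuclideanSpace.single_apply]
      · refine ⟨0, ?_⟩
        have hco : ∀ q, (e i - e j) q = (if q = i then (1:ℝ) else 0) - (if q = j then 1 else 0) := by
          intro q; rw [PiLp.sub_apply]; simp [he, EuclideanSpace.single_apply]
        rw [Finset.sum_congr rfl fun q _ => hco q, Finset.sum_sub_distrib]
        simp
    have hsq2add : ∀ i j : Fin 12, i ≠ j → ∑ p, ((e i + e j) p)^2 = 2 := by
      intro i j hij
      have hco : ∀ q, ((e i + e j) q)^2
          = (if q = i then (1:ℝ) else 0) + (if q = j then 1 else 0) := by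
        intro q
        rw [PiLp.add_apply]
        by_cases h1 : q = i
        · have h2 : ¬ q = j := by rw [h1]; exact hij
          simp [he, EuclideanSpace.single_apply, h1, h2, hij, Ne.symm hij]
        · by_cases h2 : q = j <;>
            simp [he, EuclideanSpace.single_apply, h1, h2, hij, Ne.symm hij]
      rw [Finset.sum_congr rfl fun q _ => hco q, Finset.sum_add_distrib]
      norm_num
    have hsq2sub : ∀ i j : Fin 12, i ≠ j → ∑ p, ((e i - e j) p)^2 = 2 := by
      intro i j hij
      have hco : ∀ q, ((e i - e j) q)^2
          = (if q = i then (1:ℝ) else 0) + (if q = j then 1 else 0) := by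
        intro q
        rw [PiLp.sub_apply]
        by_cases h1 : q = i
        · have h2 : ¬ q = j := by rw [h1]; exact hij
          simp [he, EuclideanSpace.single_apply, h1, h2, hij, Ne.symm hij]
        · by_cases h2 : q = j <;>
            simp [he, EuclideanSpace.single_apply, h1, h2, hij, Ne.symm hij]
      rw [Finset.sum_congr rfl fun q _ => hco q, Finset.sum_add_distrib]
      norm_num
    have hpm : ∀ i j : Fin 12, i ≠ j → ∀ p,
        (g i p + g j p = 0 ∨ g i p + g j p = 1 ∨ g i p + g j p = -1) ∧
        (g i p - g j p = 0 ∨ g i p - g j p = 1 ∨ g i p - g j p = -1) := by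
      intro i j hij p
      constructor
      · have hmem := hfD _ (hmemadd i j hij)
        have hsq : ∑ q, (f (e i + e j) q)^2 = 2 := by rw [sumsq]; exact hsq2add i j hij
        have hcs := coords_small hmem hsq p
        rw [map_add, PiLp.add_apply] at hcs
        exact hcs
      · have hmem := hfD _ (hmemsub i j hij)
        have hsq : ∑ q, (f (e i - e j) q)^2 = 2 := by rw [sumsq]; exact hsq2sub i j hij
        have hcs := coords_small hmem hsq p
        rw [map_sub, PiLp.sub_apply] at hcs
        exact hcs
    -- Bessel
    have horth : Orthonormal ℝ g := by
      have := (EuclideanSpace.orthonormal_single (𝕜 := ℝ) (ι := Fin 12)).comp_linearIsometryEquiv f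
      exact this
    have hB : ∀ p, ∑ i, (g i p)^2 ≤ 1 := by
      intro p
      have hb := horth.sum_inner_products_le (EuclideanSpace.single p (1:ℝ)) (s := Finset.univ)
      have h1 : ∀ i, ‖⟪g i, EuclideanSpace.single p (1:ℝ)⟫‖^2 = (g i p)^2 := by
        intro i
        rw [EuclideanSpace.inner_single_right]
        simp [Real.norm_eq_abs, sq_abs]
      rw [Finset.sum_congr rfl fun i _ => h1 i] at hb
      simpa using hb
    -- every coordinate of every g i is 0, 1 or -1
    have step1 : ∀ i p, g i p = 0 ∨ g i p = 1 ∨ g i p = -1 := by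
      intro i p
      have hj : ∃ j, j ≠ i := ⟨if i = 0 then 1 else 0, by split <;> simp_all <;> omega⟩
      obtain ⟨j, hj⟩ := hj
      have hpij := hpm i j (Ne.symm hj) p
      rcases mini1 hpij.1 hpij.2 with h0|h0|h0|h0
      · exact Or.inl h0
      · exact Or.inr (Or.inl h0)
      · exact Or.inr (Or.inr h0)
      exfalso
      have hquarter : ∀ k, (g k p)^2 = 1/4 := by
        intro k
        by_cases hk : k = i
        · subst hk
          rcases h0 with h0|h0 <;> rw [h0] <;> norm_num
        · have hpik := hpm i k (fun e => hk e.symm) p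
          exact mini2 hpik.1 hpik.2 h0
      have h3 : (3:ℝ) ≤ ∑ k, (g k p)^2 := by
        have := Finset.sum_le_sum (fun k (_ : k ∈ Finset.univ) => le_of_eq (hquarter k).symm)
        calc (3:ℝ) = ∑ _k : Fin 12, (1/4:ℝ) := by simp; norm_num
          _ ≤ _ := this
      linarith [hB p]
    -- each g i is supported on a single coordinate
    have hnorm1 : ∀ i, ∑ p, (g i p)^2 = 1 := by
      intro i
      rw [hg]
      rw [sumsq]
      have hco : ∀ q, ((e i) q)^2 = if q = i then (1:ℝ) else 0 := by
        intro q; by_cases h1 : q = i <;> simp [he, EuclideanSpace.single_apply, h1]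
      rw [Finset.sum_congr rfl fun q _ => hco q]
      simp
    have huniq : ∀ i, ∃ p, (g i p = 1 ∨ g i p = -1) ∧ ∀ q, q ≠ p → g i q = 0 := by
      intro i
      set T := Finset.univ.filter (fun p => g i p ≠ 0) with hT
      have hsumT : ∑ p ∈ T, (g i p)^2 = ∑ p, (g i p)^2 := by
        apply Finset.sum_filter_of_ne
        intro p _ hp
        intro h0; rw [h0] at hp; simp at hp
      have hcard : (T.card : ℝ) = 1 := by
        have hones : ∑ p ∈ T, (g i p)^2 = (T.card : ℝ) := by
          rw [Finset.sum_congr rfl (fun p hp => ?_), Finset.sum_const, nsmul_eq_mul, mul_one]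
          have hp0 : g i p ≠ 0 := (Finset.mem_filter.mp hp).2
          rcases step1 i p with h0|h0|h0
          · exact absurd h0 hp0
          · rw [h0]; norm_num
          · rw [h0]; norm_num
        rw [← hones, hsumT, hnorm1 i]
      have hcard1 : T.card = 1 := by exact_mod_cast hcard
      obtain ⟨p, hp⟩ := Finset.card_eq_one.mp hcard1
      refine ⟨p, ?_, ?_⟩
      · have hpT : p ∈ T := by rw [hp]; exact Finset.mem_singleton_self p
        have hp0 : g i p ≠ 0 := (Finset.mem_filter.mp hpT).2
        rcases step1 i p with h0|h0|h0
        · exact absurd h0 hp0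
        · exact Or.inl h0
        · exact Or.inr h0
      · intro q hq
        by_contra h0
        have hqT : q ∈ T := Finset.mem_filter.mpr ⟨Finset.mem_univ q, h0⟩
        rw [hp, Finset.mem_singleton] at hqT
        exact hq hqT
    choose c hc1 hc2 using huniq
    have hcinj : Function.Injective c := by
      intro i j hij
      by_contra hne
      have h1 := hc1 i
      have h2 := hc1 j
      rw [← hij] at h2
      have h3 := (hpm i j hne (c i)).1
      have h4 := (hpm i j hne (c i)).2
      rcases h1 with h1|h1 <;> rcases h2 with h2|h2 <;>
        rcases h3 with h3|h3|h3 <;> rcases h4 with h4|h4|h4 <;> linarith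
    have hcbij : Function.Bijective c := Finite.injective_iff_bijective.mp hcinj
    set ce := Equiv.ofBijective c hcbij with hce
    set σ := ce.symm with hσ
    have hcσ : ∀ p, c (σ p) = p := fun p => ce.apply_symm_apply p
    set ε : Fin 12 → ℝ := fun p => g (σ p) p with hε
    have hεpm : ∀ p, ε p = 1 ∨ ε p = -1 := by
      intro p
      have := hc1 (σ p)
      rw [hcσ p] at this
      exact this
    have hform : ∀ (x : EuclideanSpace ℝ (Fin 12)) (i : Fin 12), f x i = ε i * x (σ i) := by
      intro x i
      have hgval : f ((ε i) • EuclideanSpace.single (σ i) (1:ℝ)) = EuclideanSpace.single i (1:ℝ) := by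
        rw [map_smul]
        apply PiLp.ext
        intro q
        rw [PiLp.smul_apply, smul_eq_mul]
        by_cases hq : q = i
        · subst hq
          have : g (σ q) q = ε q := rfl
          rw [show f (EuclideanSpace.single (σ q) (1:ℝ)) = g (σ q) from rfl, this,
            EuclideanSpace.single_apply, if_pos rfl]
          rcases hεpm q with h0|h0 <;> rw [h0] <;> norm_num
        · rw [show f (EuclideanSpace.single (σ i) (1:ℝ)) = g (σ i) from rfl]
          rw [hc2 (σ i) q (by rw [hcσ i]; exact hq), EuclideanSpace.single_apply, if_neg hq,
            mul_zero]
      have h2 : f x i = ⟪f x, EuclideanSpace.single i (1:ℝ)⟫ := by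
        rw [EuclideanSpace.inner_single_right]
        simp
      rw [h2, ← hgval, f.inner_map_map, real_inner_smul_right, EuclideanSpace.inner_single_right]
      simp
    -- evenness of the sign changes via the all-halves vector
    refine ⟨σ, ε, hεpm, ?_, hform⟩
    set v : EuclideanSpace ℝ (Fin 12) := WithLp.toLp 2 (fun _ => (1/2 : ℝ)) with hv
    have hvD : v ∈ D12plus := by
      constructor
      · right
        exact fun i => ⟨0, by norm_num⟩
      · refine ⟨3, ?_⟩
        show ∑ _i : Fin 12, (1/2:ℝ) = 2 * (3:ℝ)
        simp; norm_num
    obtain ⟨-, m, hm⟩ := hfD v hvD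
    have hsum : ∑ i, ε i = 4 * (m:ℝ) := by
      have hfv : ∀ i, f v i = ε i * (1/2) := fun i => hform v i
      rw [Finset.sum_congr rfl fun i _ => hfv i] at hm
      rw [← Finset.sum_mul] at hm
      linarith
    set k := (Finset.univ.filter (fun i => ε i = -1)).card with hk
    have hkeq : (k:ℤ) = 6 - 2*m := by
      have := sum_sign_eq 12 ε hεpm
      rw [hsum] at this
      have : ((k:ℤ):ℝ) = ((6 - 2*m : ℤ):ℝ) := by push_cast; push_cast at this; linarith
      exact_mod_cast this
    have hkeven : Even k := by
      have : Even (k:ℤ) := ⟨3 - m, by omega⟩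
      exact Int.even_coe_nat k |>.mp this
    rw [prod_sign_eq 12 ε hεpm, ← hk]
    exact hkeven.neg_one_pow
  · rintro ⟨σ, ε, hε, hprod, hf⟩
    apply Set.ext; intro y
    constructor
    · rintro ⟨x, hx, rfl⟩
      exact signed_perm_mem σ ε hε hprod hx (hf x)
    · intro hy
      set x : EuclideanSpace ℝ (Fin 12) := WithLp.toLp 2 (fun j => ε (σ.symm j) * y (σ.symm j)) with hxdef
      have hx : x ∈ D12plus := by
        refine signed_perm_mem σ.symm (fun j => ε (σ.symm j)) (fun j => hε _) ?_ hy (fun i => rfl)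
        rw [Equiv.prod_comp σ.symm ε]
        exact hprod
      refine ⟨x, hx, PiLp.ext fun i => ?_⟩
      have h1 : x (σ i) = ε i * y i := by
        show ε (σ.symm (σ i)) * y (σ.symm (σ i)) = _
        rw [Equiv.symm_apply_apply]
      rw [hf x i, h1]
      rcases hε i with h | h <;> rw [h] <;> ring
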